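/- For ψ ∈ K₁ ⊕ K₁, the following are equivalent: (i) ULψ = Lψ ≠ 0; (ii) ψ ∈ ker((I - T̃)²(I + T̃)) \ ker L; (iii) ψ = ψ₁ + ψ₂ with ψ₁ ∈ ker(I - T̃)² \ ker(I - T̃), ψ₁ ≠ 0, and ψ₂ ∈ ker L. -/

import Mathlib

open ContinuousLinearMap

set_option maxHeartbeats 1000000 in
theorem stmt17 {K₁ K₂ : Type*}
    [NormedAddCommGroup K₁] [InnerProductSpace ℂ K₁] [FiniteDimensional ℂ K₁]
    [NormedAddCommGroup K₂] [InnerProductSpace ℂ K₂] [FiniteDimensional ℂ K₂]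
    (S : K₂ →L[ℂ] K₂) (hS : IsSelfAdjoint S) (hSu : S ∈ unitary (K₂ →L[ℂ] K₂))
    (dA : K₂ →L[ℂ] K₁) (h : dA ∘L adjoint dA = 1)
    (dB : K₂ →L[ℂ] K₁) (hdB : dB = dA ∘L S)
    (T : K₁ →L[ℂ] K₁) (hT : T = dA ∘L adjoint dB)
    (U : K₂ →L[ℂ] K₂) (hU : U = S ∘L ((2:ℂ) • (adjoint dA ∘L dA) - 1))
    (L : K₁ × K₁ →L[ℂ] K₂) (hL : ∀ f g : K₁, L (f, g) = adjoint dA f + adjoint dB g)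
    (Ttil : K₁ × K₁ →L[ℂ] K₁ × K₁)
    (hTtil : ∀ f g : K₁, Ttil (f, g) = (-g, f + (2:ℂ) • T g))
    (ψ : K₁ × K₁) :
    (U (L ψ) = L ψ ∧ L ψ ≠ 0
      ↔ ((((1 - Ttil) ^ 2) ∘L (1 + Ttil)) ψ = 0 ∧ L ψ ≠ 0)) ∧
    (U (L ψ) = L ψ ∧ L ψ ≠ 0
      ↔ ∃ ψ₁ ψ₂ : K₁ × K₁, ψ = ψ₁ + ψ₂ ∧
          (((1 - Ttil) ^ 2 : K₁ × K₁ →L[ℂ] K₁ × K₁)) ψ₁ = 0 ∧ (1 - Ttil) ψ₁ ≠ 0 ∧ ψ₁ ≠ 0 ∧ L ψ₂ = 0) := by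
  classical
  -- basic facts
  have hSadj : adjoint S = S := by rw [← star_eq_adjoint]; exact hS
  have hSmul : S * S = 1 := by
    have := (Unitary.mem_iff.mp hSu).1
    rwa [hS.star_eq] at this
  have hSS : ∀ x, S (S x) = x := by
    intro x
    calc S (S x) = (S * S) x := rfl
    _ = x := by rw [hSmul]; rfl
  have hdA : ∀ x, dA (adjoint dA x) = x := by
    intro x
    have : (dA ∘L adjoint dA) x = (1 : K₁ →L[ℂ] K₁) x := by rw [h]
    simpa using this
  have hdBadj : ∀ x, adjoint dB x = S (adjoint dA x) := by
    intro x
    rw [hdB, ContinuousLinearMap.adjoint_comp, hSadj]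
    rfl
  have hTapp : ∀ g, T g = dA (S (adjoint dA g)) := by
    intro g; rw [hT]; simp [hdBadj]
  have hLapp : ∀ f g : K₁, L (f, g) = adjoint dA f + S (adjoint dA g) := by
    intro f g; rw [hL, hdBadj]
  have hUapp : ∀ x, U x = S ((2:ℂ) • (adjoint dA (dA x)) - x) := by
    intro x; rw [hU]; rfl
  -- key intertwining: U ∘ L = L ∘ Ttil
  have hUL : ∀ p : K₁ × K₁, U (L p) = L (Ttil p) := by
    intro p
    obtain ⟨f, g⟩ := p
    rw [hTtil, hLapp, hLapp, hUapp]
    simp only [map_add, map_smul, map_sub, map_neg, hdA, hSS, hTapp]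
    module
  -- kernel of L is Ttil-invariant
  have hkerInv : ∀ p : K₁ × K₁, L p = 0 → L (Ttil p) = 0 := by
    intro p hp; rw [← hUL, hp, map_zero]
  -- on ker L, Ttil is an involution
  have hkerT2 : ∀ p : K₁ × K₁, L p = 0 → Ttil (Ttil p) = p := by
    intro p hp
    obtain ⟨f, g⟩ := p
    rw [hLapp] at hp
    have h1 : f + T g = 0 := by
      have := congrArg dA hp
      simpa [map_add, hdA, hTapp] using this
    have h2 : T f + g = 0 := by
      have := congrArg (fun x => dA (S x)) hp
      simpa [map_add, hSS, hdA, hTapp] using this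
    have hTg : T g = -f := by linear_combination (norm := module) h1
    have hTf : T f = -g := by linear_combination (norm := module) h2
    rw [hTtil, hTtil]
    ext
    · simp only [map_add, map_smul, map_neg, hTg]
      module
    · simp only [map_add, map_smul, map_neg, hTg, hTf]
      module
  -- inner product facts
  have hisom : ∀ a b : K₁, (inner ℂ (adjoint dA a) (adjoint dA b) : ℂ) = inner ℂ a b := by
    intro a b
    rw [ContinuousLinearMap.adjoint_inner_left, hdA]
  have hST : ∀ a b : K₁, (inner ℂ (adjoint dA a) (S (adjoint dA b)) : ℂ) = inner ℂ a (T b) := by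
    intro a b
    rw [ContinuousLinearMap.adjoint_inner_left, hTapp]
  have hSinn : ∀ x y : K₂, (inner ℂ (S x) y : ℂ) = inner ℂ x (S y) := by
    intro x y
    conv_lhs => rw [← hSadj]
    rw [ContinuousLinearMap.adjoint_inner_left]
  have hyy : ∀ g : K₁, (inner ℂ (S (adjoint dA g)) (S (adjoint dA g)) : ℂ) = inner ℂ g g := by
    intro g; rw [hSinn, hSS, hisom]
  have hyx : ∀ g : K₁, (inner ℂ (S (adjoint dA g)) (adjoint dA g) : ℂ) = inner ℂ g (T g) := by
    intro g; rw [hSinn, hST]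
  -- eigenvectors of Ttil with eigenvalue ±1 are in ker L
  have hplus : ∀ p : K₁ × K₁, Ttil p = p → L p = 0 := by
    intro p hp
    obtain ⟨f, g⟩ := p
    rw [hTtil] at hp
    have hfg : f = -g := by
      have := congrArg Prod.fst hp
      simpa using this.symm
    have hTgg : T g = g := by
      have h2 := congrArg Prod.snd hp
      simp only at h2
      rw [hfg] at h2
      have h3 : (2:ℂ) • T g = (2:ℂ) • g := by linear_combination (norm := module) h2
      exact smul_right_injective K₁ (by norm_num : (2:ℂ) ≠ 0) h3
    rw [hLapp, hfg]
    have key : (inner ℂ (adjoint dA (-g) + S (adjoint dA g)) (adjoint dA (-g) + S (adjoint dA g)) : ℂ) = 0 := by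
      rw [map_neg, neg_add_eq_sub, inner_sub_sub_self]
      rw [hyy, hyx, hST, hisom, hTgg]
      ring
    exact inner_self_eq_zero.mp key
  have hminus : ∀ p : K₁ × K₁, Ttil p = -p → L p = 0 := by
    intro p hp
    obtain ⟨f, g⟩ := p
    rw [hTtil] at hp
    have hfg : f = g := by
      have := congrArg Prod.fst hp
      simp only [Prod.fst_neg] at this
      exact (neg_injective this).symm
    have hTgg : T g = -g := by
      have h2 := congrArg Prod.snd hp
      simp only [Prod.snd_neg] at h2
      rw [hfg] at h2
      have h3 : (2:ℂ) • T g = (2:ℂ) • (-g) := by linear_combination (norm := module) h2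
      exact smul_right_injective K₁ (by norm_num : (2:ℂ) ≠ 0) h3
    rw [hLapp, hfg]
    have key : (inner ℂ (adjoint dA g + S (adjoint dA g)) (adjoint dA g + S (adjoint dA g)) : ℂ) = 0 := by
      rw [inner_add_add_self]
      rw [hyy, hyx, hST, hisom, hTgg, inner_neg_right]
      ring
    exact inner_self_eq_zero.mp key
  -- application lemmas
  have hEapp : ∀ p : K₁ × K₁, (1 - Ttil) p = p - Ttil p := by
    intro p; simp [ContinuousLinearMap.sub_apply]
  have hFapp : ∀ p : K₁ × K₁, (1 + Ttil) p = p + Ttil p := by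
    intro p; simp [ContinuousLinearMap.add_apply]
  have hsq : ∀ p : K₁ × K₁, ((1 - Ttil) ^ 2 : K₁ × K₁ →L[ℂ] K₁ × K₁) p = (1 - Ttil) ((1 - Ttil) p) := by
    intro p; rw [sq, ContinuousLinearMap.mul_apply]
  -- the three implications
  have hC2 : (((1 - Ttil) ^ 2) ∘L (1 + Ttil)) ψ
      = ψ - Ttil ψ - Ttil (Ttil ψ) + Ttil (Ttil (Ttil ψ)) := by
    rw [ContinuousLinearMap.comp_apply, hsq, hFapp, hEapp, hEapp]
    simp only [map_add, map_sub]
    module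
  have P1 : U (L ψ) = L ψ → ψ - Ttil ψ - Ttil (Ttil ψ) + Ttil (Ttil (Ttil ψ)) = 0 := by
    intro hi
    have hker : L (ψ - Ttil ψ) = 0 := by
      rw [map_sub, ← hUL, hi, sub_self]
    have hT2 := hkerT2 _ hker
    simp only [map_sub] at hT2
    linear_combination (norm := module) (-1 : ℂ) • hT2
  have P2 : (ψ - Ttil ψ - Ttil (Ttil ψ) + Ttil (Ttil (Ttil ψ)) = 0 ∧ L ψ ≠ 0) →
      ∃ ψ₁ ψ₂ : K₁ × K₁, ψ = ψ₁ + ψ₂ ∧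
        (((1 - Ttil) ^ 2 : K₁ × K₁ →L[ℂ] K₁ × K₁)) ψ₁ = 0 ∧ (1 - Ttil) ψ₁ ≠ 0 ∧ ψ₁ ≠ 0 ∧ L ψ₂ = 0 := by
    rintro ⟨h2, hLψ⟩
    have h2' : Ttil ψ - Ttil (Ttil ψ) - Ttil (Ttil (Ttil ψ)) + Ttil (Ttil (Ttil (Ttil ψ))) = 0 := by
      have := congrArg Ttil h2
      simpa only [map_sub, map_add, map_zero] using this
    set ψ₁ : K₁ × K₁ := (4⁻¹ : ℂ) • ((3:ℂ) • ψ + (2:ℂ) • Ttil ψ - Ttil (Ttil ψ)) with hψ₁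
    set ψ₂ : K₁ × K₁ := (4⁻¹ : ℂ) • (ψ - (2:ℂ) • Ttil ψ + Ttil (Ttil ψ)) with hψ₂
    have hsum : ψ = ψ₁ + ψ₂ := by rw [hψ₁, hψ₂]; module
    have hE1 : (1 - Ttil) ψ₁ = (4⁻¹ : ℂ) • ((3:ℂ) • ψ - Ttil ψ - (3:ℂ) • Ttil (Ttil ψ) + Ttil (Ttil (Ttil ψ))) := by
      rw [hEapp, hψ₁]
      simp only [map_smul, map_add, map_sub]
      module
    have hE2 : ((1 - Ttil) ^ 2 : K₁ × K₁ →L[ℂ] K₁ × K₁) ψ₁ = 0 := by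
      rw [hsq, hE1, hEapp]
      simp only [map_smul, map_add, map_sub]
      linear_combination (norm := module) (3 * 4⁻¹ : ℂ) • h2 - (4⁻¹ : ℂ) • h2'
    have hLψ₂ : L ψ₂ = 0 := by
      apply hminus
      rw [hψ₂]
      simp only [map_smul, map_add, map_sub]
      linear_combination (norm := module) (4⁻¹ : ℂ) • h2
    have hE1ne : (1 - Ttil) ψ₁ ≠ 0 := by
      intro h0
      have hTfix : Ttil ψ₁ = ψ₁ := by
        rw [hEapp] at h0
        linear_combination (norm := module) (-1 : ℂ) • h0
      have hLψ₁ : L ψ₁ = 0 := hplus _ hTfix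
      apply hLψ
      rw [hsum, map_add, hLψ₁, hLψ₂, add_zero]
    exact ⟨ψ₁, ψ₂, hsum, hE2, hE1ne, fun h0 => hE1ne (by rw [h0, map_zero]), hLψ₂⟩
  have P3 : (∃ ψ₁ ψ₂ : K₁ × K₁, ψ = ψ₁ + ψ₂ ∧
        (((1 - Ttil) ^ 2 : K₁ × K₁ →L[ℂ] K₁ × K₁)) ψ₁ = 0 ∧ (1 - Ttil) ψ₁ ≠ 0 ∧ ψ₁ ≠ 0 ∧ L ψ₂ = 0) →
      U (L ψ) = L ψ ∧ L ψ ≠ 0 := by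
    rintro ⟨ψ₁, ψ₂, hsum, hE2, hE1ne, hψ₁ne, hLψ₂⟩
    have hE2' : ψ₁ - Ttil ψ₁ - Ttil ψ₁ + Ttil (Ttil ψ₁) = 0 := by
      rw [hsq, hEapp, hEapp] at hE2
      simp only [map_sub] at hE2
      linear_combination (norm := module) hE2
    have hχfix : Ttil (ψ₁ - Ttil ψ₁) = ψ₁ - Ttil ψ₁ := by
      rw [map_sub]
      linear_combination (norm := module) (-1 : ℂ) • hE2'
    have hLχ : L (ψ₁ - Ttil ψ₁) = 0 := hplus _ hχfix
    have hLT1 : L (Ttil ψ₁) = L ψ₁ := by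
      rw [map_sub, sub_eq_zero] at hLχ
      exact hLχ.symm
    have hLT2 : L (Ttil ψ₂) = 0 := hkerInv _ hLψ₂
    have hLψ1 : L ψ = L ψ₁ := by rw [hsum, map_add, hLψ₂, add_zero]
    refine ⟨?_, ?_⟩
    · rw [hUL, hsum, map_add Ttil, map_add, map_add, hLT1, hLT2, hLψ₂, add_zero]
    · rw [hLψ1]
      intro h0
      have hinv := hkerT2 _ h0
      apply hE1ne
      have h2χ : (2:ℂ) • ((1 - Ttil) ψ₁) = 0 := by
        rw [hEapp]
        rw [hinv] at hE2'
        linear_combination (norm := module) hE2'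
      have hhalf : (1 - Ttil) ψ₁ = (2⁻¹:ℂ) • ((2:ℂ) • ((1 - Ttil) ψ₁)) := by module
      rw [hhalf, h2χ, smul_zero]
  refine ⟨⟨fun hi => by rw [hC2]; exact ⟨P1 hi.1, hi.2⟩,
          fun hii => P3 (P2 ⟨by rw [← hC2]; exact hii.1, hii.2⟩)⟩,
         ⟨fun hi => P2 ⟨P1 hi.1, hi.2⟩, P3⟩⟩
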